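/- If ν is twice differentiable on an interval where e^{λ} > 1, with ν' ≠ 0, and satisfies the Karmarkar condition 2ν'' + ν'² = ν'λ'e^λ/(e^λ − 1), then e^{ν} = (C + D·∫√(e^{λ} − 1) dr)² for some constants C, D; equivalently, with y = e^{ν/2}, one has y''/y' = (d/dr) log√(e^λ − 1), so y' is proportional to √(e^λ − 1). -/

import Mathlib

open Real Set

lemma const_of_hasDerivAt_zero {s : Set ℝ} (hs : Convex ℝ s) (ho : IsOpen s)
    {h : ℝ → ℝ} (hd : ∀ r ∈ s, HasDerivAt h 0 r) {x y : ℝ}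
    (hx : x ∈ s) (hy : y ∈ s) : h x = h y := by
  refine hs.is_const_of_fderivWithin_eq_zero
    (fun r hr => (hd r hr).differentiableAt.differentiableWithinAt) (fun r hr => ?_) hx hy
  rw [fderivWithin_of_isOpen ho hr, (hd r hr).hasFDerivAt.fderiv]
  ext z; simp

theorem karmarkar_general_solution
    (R₀ : ℝ) (hR₀ : 0 < R₀) (f g F : ℝ → ℝ)
    (hf : DifferentiableOn ℝ f (Ioo 0 R₀))
    (hf' : DifferentiableOn ℝ (deriv f) (Ioo 0 R₀))
    (hg : DifferentiableOn ℝ g (Ioo 0 R₀))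
    (hf'ne : ∀ r ∈ Ioo 0 R₀, deriv f r ≠ 0)
    (hgt : ∀ r ∈ Ioo 0 R₀, 1 < Real.exp (g r))
    (hF : ∀ r ∈ Ioo 0 R₀, HasDerivAt F (Real.sqrt (Real.exp (g r) - 1)) r)
    (hK : ∀ r ∈ Ioo 0 R₀,
      2 * deriv (deriv f) r + (deriv f r) ^ 2
        = deriv f r * deriv g r * Real.exp (g r) / (Real.exp (g r) - 1)) :
    ∃ C D : ℝ, ∀ r ∈ Ioo 0 R₀, Real.exp (f r) = (C + D * F r) ^ 2 := by
  set s : Set ℝ := Ioo 0 R₀ with hsdef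
  have hso : IsOpen s := isOpen_Ioo
  have hsc : Convex ℝ s := convex_Ioo 0 R₀
  -- basic facts at each point
  have hA : ∀ r ∈ s, (0:ℝ) < Real.exp (g r) - 1 := fun r hr => by
    have := hgt r hr; linarith
  have hS : ∀ r ∈ s, (0:ℝ) < Real.sqrt (Real.exp (g r) - 1) := fun r hr =>
    Real.sqrt_pos.mpr (hA r hr)
  have hfd : ∀ r ∈ s, HasDerivAt f (deriv f r) r := fun r hr =>
    (hf.differentiableAt (hso.mem_nhds hr)).hasDerivAt
  have hfd' : ∀ r ∈ s, HasDerivAt (deriv f) (deriv (deriv f) r) r := fun r hr =>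
    (hf'.differentiableAt (hso.mem_nhds hr)).hasDerivAt
  have hgd : ∀ r ∈ s, HasDerivAt g (deriv g r) r := fun r hr =>
    (hg.differentiableAt (hso.mem_nhds hr)).hasDerivAt
  -- E = exp(f/2)
  have hE : ∀ r ∈ s, HasDerivAt (fun t => Real.exp (f t / 2))
      (deriv f r / 2 * Real.exp (f r / 2)) r := fun r hr => by
    simpa [mul_comm] using ((hfd r hr).div_const 2).exp
  -- Sq = sqrt(e^g - 1)
  have hSq : ∀ r ∈ s, HasDerivAt (fun t => Real.sqrt (Real.exp (g t) - 1))
      (deriv g r * Real.exp (g r) / (2 * Real.sqrt (Real.exp (g r) - 1))) r := fun r hr => by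
    have h1 : HasDerivAt (fun t => Real.exp (g t) - 1) (deriv g r * Real.exp (g r)) r := by
      simpa [mul_comm] using ((hgd r hr).exp.sub_const 1)
    exact h1.sqrt (ne_of_gt (hA r hr))
  -- u = f' * exp(f/2) / sqrt(e^g-1) has zero derivative
  set u : ℝ → ℝ := fun t => deriv f t * Real.exp (f t / 2) / Real.sqrt (Real.exp (g t) - 1)
    with hudef
  have hu0 : ∀ r ∈ s, HasDerivAt u 0 r := by
    intro r hr
    have hSne := ne_of_gt (hS r hr)
    have hd := (((hfd' r hr).mul (hE r hr)).div (hSq r hr) hSne)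
    have hval : (deriv (deriv f) r * Real.exp (f r / 2) +
          deriv f r * (deriv f r / 2 * Real.exp (f r / 2))) *
          Real.sqrt (Real.exp (g r) - 1) -
        deriv f r * Real.exp (f r / 2) *
          (deriv g r * Real.exp (g r) / (2 * Real.sqrt (Real.exp (g r) - 1))) = 0 := by
      have hKr := hK r hr
      have hAne := ne_of_gt (hA r hr)
      have hsq : Real.sqrt (Real.exp (g r) - 1) ^ 2 = Real.exp (g r) - 1 :=
        Real.sq_sqrt (le_of_lt (hA r hr))
      field_simp at hKr ⊢
      linear_combination (Real.exp (f r / 2) * (2 * deriv (deriv f) r + deriv f r ^ 2)) * hsq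
        + Real.exp (f r / 2) * hKr
    have : ((deriv (deriv f) r * Real.exp (f r / 2) +
          deriv f r * (deriv f r / 2 * Real.exp (f r / 2))) *
          Real.sqrt (Real.exp (g r) - 1) -
        deriv f r * Real.exp (f r / 2) *
          (deriv g r * Real.exp (g r) / (2 * Real.sqrt (Real.exp (g r) - 1)))) /
        Real.sqrt (Real.exp (g r) - 1) ^ 2 = 0 := by rw [hval]; simp
    have hd2 : HasDerivAt ((deriv f * fun t => Real.exp (f t / 2)) /
        fun t => Real.sqrt (Real.exp (g t) - 1)) 0 r := by simpa [this] using hd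
    exact hd2
  -- u is constant
  set r₀ : ℝ := R₀ / 2 with hr₀def
  have hr₀ : r₀ ∈ s := by constructor <;> [positivity; linarith]
  set D : ℝ := u r₀ / 2 with hDdef
  have huconst : ∀ r ∈ s, u r = 2 * D := by
    intro r hr
    have := const_of_hasDerivAt_zero hsc hso hu0 hr hr₀
    rw [this, hDdef]; ring
  -- v = exp(f/2) - D * F has zero derivative
  set v : ℝ → ℝ := fun t => Real.exp (f t / 2) - D * F t with hvdef
  have hv0 : ∀ r ∈ s, HasDerivAt v 0 r := by
    intro r hr
    have hd := (hE r hr).sub ((hF r hr).const_mul D)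
    have hSne := ne_of_gt (hS r hr)
    have hur := huconst r hr
    rw [hudef] at hur
    simp only at hur
    have h1 : deriv f r * Real.exp (f r / 2) = 2 * D * Real.sqrt (Real.exp (g r) - 1) := by
      field_simp at hur; linarith
    have h2 : deriv f r / 2 * Real.exp (f r / 2) - D * Real.sqrt (Real.exp (g r) - 1) = 0 := by
      nlinarith [h1]
    have hd2 : HasDerivAt ((fun t => Real.exp (f t / 2)) - fun y => D * F y) 0 r := by
      simpa [h2] using hd
    exact hd2
  set C : ℝ := v r₀ with hCdef
  refine ⟨C, D, fun r hr => ?_⟩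
  have hvr : v r = C := const_of_hasDerivAt_zero hsc hso hv0 hr hr₀
  have hEr : Real.exp (f r / 2) = C + D * F r := by
    rw [hvdef] at hvr; simp only at hvr; linarith
  have : Real.exp (f r) = Real.exp (f r / 2) ^ 2 := by
    rw [sq, ← Real.exp_add]; ring_nf
  rw [this, hEr]
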